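/- Consider the generalized fair learning problem: minimize E_{(x,s)∼P_{X,S}}[ TV(Q_{Ŷ|X=x,S=s}, P_{Y|X=x,S=s}) ] over conditional distributions Q_{Ŷ|X,S} subject to I(Ŷ; S) ≤ ε (mutual information in nats), where Ŷ is distributed according to Q_{Ŷ|X,S} · P_{X,S}. Suppose there exists φ : 𝒳 × 𝒴 → ℝ such that P(X=x | Y=y, S=s) / P(X=x | S=s) = φ(x, y) for all x ∈ 𝒳, y ∈ 𝒴, s ∈ 𝒮, and s_max ∈ 𝒮 satisfies P_S(s_max) = 1/2 + δ for some δ > 0. Then for any optimal solution Q*, the induced Ŷ satisfies: E_{s∼P_S}[ TV(P_{Ŷ|S=s}, P_{Y|S=s_max}) ] ≤ (1/2 + 1/(4δ)) · √(2ε). -/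

import Mathlib

open Finset

noncomputable section

variable {𝒳 𝒴 𝒮 : Type*} [Fintype 𝒳] [Fintype 𝒴] [Fintype 𝒮]

/-- Total variation distance between two finitely supported distributions on `𝒴`,
`TV(p, q) = (1/2) ∑ y, |p y - q y|`. -/
def TV (p q : 𝒴 → ℝ) : ℝ := (1 / 2) * ∑ y, |p y - q y|

/-- Marginal distribution of `(X, S)` under the joint `P` of `(X, Y, S)`. -/
def margXS (P : 𝒳 → 𝒴 → 𝒮 → ℝ) (x : 𝒳) (s : 𝒮) : ℝ := ∑ y, P x y s

/-- Marginal distribution of `(Y, S)`. -/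
def margYS (P : 𝒳 → 𝒴 → 𝒮 → ℝ) (y : 𝒴) (s : 𝒮) : ℝ := ∑ x, P x y s

/-- Marginal distribution of `S`. -/
def margS (P : 𝒳 → 𝒴 → 𝒮 → ℝ) (s : 𝒮) : ℝ := ∑ x, margXS P x s

/-- Marginal distribution of `X`. -/
def margX (P : 𝒳 → 𝒴 → 𝒮 → ℝ) (x : 𝒳) : ℝ := ∑ s, margXS P x s

/-- Conditional distribution of `Y` given `X = x, S = s`. -/
def condYXS (P : 𝒳 → 𝒴 → 𝒮 → ℝ) (x : 𝒳) (s : 𝒮) (y : 𝒴) : ℝ := P x y s / margXS P x s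

/-- Conditional distribution of `Y` given `S = s`. -/
def condYS (P : 𝒳 → 𝒴 → 𝒮 → ℝ) (s : 𝒮) (y : 𝒴) : ℝ := margYS P y s / margS P s

/-- The ratio `P(X=x | Y=y, S=s) / P(X=x | S=s)`. -/
def condRatio (P : 𝒳 → 𝒴 → 𝒮 → ℝ) (x : 𝒳) (y : 𝒴) (s : 𝒮) : ℝ :=
  (P x y s / margYS P y s) / (margXS P x s / margS P s)

/-- A conditional distribution `Q`: for every `(x, s)`, `Q x s` is a probability
distribution on labels. -/
def IsRule (Q : 𝒳 → 𝒮 → 𝒴 → ℝ) : Prop :=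
  (∀ x s y, 0 ≤ Q x s y) ∧ ∀ x s, ∑ y, Q x s y = 1

/-- The generalized objective: `E_{(x,s)∼P_{X,S}}[TV(Q_{Ŷ|X=x,S=s}, P_{Y|X=x,S=s})]`. -/
def objective (P : 𝒳 → 𝒴 → 𝒮 → ℝ) (Q : 𝒳 → 𝒮 → 𝒴 → ℝ) : ℝ :=
  ∑ x, ∑ s, margXS P x s * TV (Q x s) (condYXS P x s)

/-- Joint distribution of `(Ŷ, S)` induced by `Q · P_{X,S}`. -/
def jointYhatS (P : 𝒳 → 𝒴 → 𝒮 → ℝ) (Q : 𝒳 → 𝒮 → 𝒴 → ℝ) (yh : 𝒴) (s : 𝒮) : ℝ :=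
  ∑ x, margXS P x s * Q x s yh

/-- Marginal distribution of the prediction `Ŷ`. -/
def margYhat (P : 𝒳 → 𝒴 → 𝒮 → ℝ) (Q : 𝒳 → 𝒮 → 𝒴 → ℝ) (yh : 𝒴) : ℝ :=
  ∑ s, jointYhatS P Q yh s

/-- Conditional distribution of the prediction `Ŷ` given `S = s`. -/
def condYhatS (P : 𝒳 → 𝒴 → 𝒮 → ℝ) (Q : 𝒳 → 𝒮 → 𝒴 → ℝ) (s : 𝒮) (yh : 𝒴) : ℝ :=
  jointYhatS P Q yh s / margS P s

/-- Mutual information (in nats) between the prediction `Ŷ` and `S`. -/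
def MI (P : 𝒳 → 𝒴 → 𝒮 → ℝ) (Q : 𝒳 → 𝒮 → 𝒴 → ℝ) : ℝ :=
  ∑ yh, ∑ s, jointYhatS P Q yh s *
    Real.log (jointYhatS P Q yh s / (margYhat P Q yh * margS P s))

private lemma log_ratio_ineq {p q a b : ℝ} (hp : 0 ≤ p) (hq : 0 < q) (ha : 0 < a) (hb : 0 < b) :
    p * Real.log (a / b) + p - q * (a / b) ≤ p * Real.log (p / q) := by
  rcases eq_or_lt_of_le hp with h | hp0
  · simp only [← h, zero_mul, zero_add, zero_sub, neg_nonpos]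
    positivity
  · have h1 : Real.log ((q * a) / (p * b)) ≤ q * a / (p * b) - 1 :=
      Real.log_le_sub_one_of_pos (by positivity)
    have h2 : Real.log ((q * a) / (p * b)) = Real.log (a / b) - Real.log (p / q) := by
      rw [show (q * a) / (p * b) = (a / b) / (p / q) by field_simp,
          Real.log_div (by positivity) (by positivity)]
    rw [h2] at h1
    have h3 : p * (Real.log (a / b) - Real.log (p / q)) ≤ p * (q * a / (p * b) - 1) :=
      mul_le_mul_of_nonneg_left h1 hp
    have h4 : p * (q * a / (p * b) - 1) = q * (a / b) - p := by
      field_simp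
    nlinarith [h3, h4]

private lemma log_sum_ineq {ι : Type*} (S : Finset ι) (p q : ι → ℝ)
    (hp : ∀ i ∈ S, 0 ≤ p i) (hq : ∀ i ∈ S, 0 ≤ q i)
    (habs : ∀ i ∈ S, q i = 0 → p i = 0) :
    (∑ i ∈ S, p i) * Real.log ((∑ i ∈ S, p i) / (∑ i ∈ S, q i)) ≤
      ∑ i ∈ S, p i * Real.log (p i / q i) := by
  classical
  set a := ∑ i ∈ S, p i with ha_def
  set b := ∑ i ∈ S, q i with hb_def
  have ha0 : 0 ≤ a := Finset.sum_nonneg hp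
  rcases eq_or_lt_of_le ha0 with haz | hapos
  · have hall : ∀ i ∈ S, p i = 0 := (Finset.sum_eq_zero_iff_of_nonneg hp).1 haz.symm
    rw [← haz]
    simp only [zero_mul]
    apply Finset.sum_nonneg
    intro i hi
    rw [hall i hi]
    simp
  · have hb0 : 0 ≤ b := Finset.sum_nonneg hq
    rcases eq_or_lt_of_le hb0 with hbz | hbpos
    · exfalso
      have hallq : ∀ i ∈ S, q i = 0 := (Finset.sum_eq_zero_iff_of_nonneg hq).1 hbz.symm
      have : a = 0 := Finset.sum_eq_zero (fun i hi => habs i hi (hallq i hi))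
      linarith
    · set S' := S.filter (fun i => 0 < q i) with hS'_def
      have hsub : S' ⊆ S := Finset.filter_subset _ _
      have hzero : ∀ i ∈ S, i ∉ S' → p i = 0 := by
        intro i hi hni
        apply habs i hi
        have : ¬ (0 < q i) := by
          intro h; exact hni (Finset.mem_filter.2 ⟨hi, h⟩)
        linarith [hq i hi, this]
      have hqzero : ∀ i ∈ S, i ∉ S' → q i = 0 := by
        intro i hi hni
        have : ¬ (0 < q i) := by
          intro h; exact hni (Finset.mem_filter.2 ⟨hi, h⟩)
        linarith [hq i hi]
      have hpa : ∑ i ∈ S', p i = a := Finset.sum_subset hsub hzero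
      have hqb : ∑ i ∈ S', q i = b := Finset.sum_subset hsub hqzero
      have hRHS : ∑ i ∈ S, p i * Real.log (p i / q i)
          = ∑ i ∈ S', p i * Real.log (p i / q i) := by
        refine (Finset.sum_subset hsub ?_).symm
        intro i hi hni
        rw [hzero i hi hni]; ring
      rw [hRHS]
      have key : ∀ i ∈ S', p i * Real.log (a / b) + p i - q i * (a / b)
          ≤ p i * Real.log (p i / q i) := by
        intro i hi
        have hiS : i ∈ S := hsub hi
        exact log_ratio_ineq (hp i hiS) ((Finset.mem_filter.1 hi).2) hapos hbpos
      calc a * Real.log (a / b)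
          = ∑ i ∈ S', (p i * Real.log (a / b) + p i - q i * (a / b)) := by
            rw [Finset.sum_sub_distrib, Finset.sum_add_distrib, ← Finset.sum_mul, ← Finset.sum_mul,
                hpa, hqb]
            field_simp
            ring
        _ ≤ ∑ i ∈ S', p i * Real.log (p i / q i) := Finset.sum_le_sum key

private lemma binary_pinsker {a b : ℝ} (hb0 : 0 ≤ b) (hba : b ≤ a) (ha1 : a ≤ 1)
    (habs : b = 0 → a = 0) :
    2 * (a - b) ^ 2 ≤ a * Real.log (a / b) + (1 - a) * Real.log ((1 - a) / (1 - b)) := by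
  rcases eq_or_lt_of_le hb0 with hbz | hb
  · have haz : a = 0 := habs hbz.symm
    simp [haz, ← hbz]
  rcases eq_or_lt_of_le ha1 with haeq | halt
  · -- a = 1
    subst haeq
    have hb1 : b ≤ 1 := hba
    set G : ℝ → ℝ := fun x => -Real.log x - 2 * (1 - x) ^ 2 with hG
    have hderiv : ∀ x : ℝ, 0 < x → HasDerivAt G (-x⁻¹ + 4 * (1 - x)) x := by
      intro x hx
      have h1 : HasDerivAt (fun y : ℝ => -Real.log y) (-x⁻¹) x :=
        (Real.hasDerivAt_log (ne_of_gt hx)).neg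
      have h2 : HasDerivAt (fun y : ℝ => 2 * (1 - y) ^ 2) (2 * ((2 : ℕ) * (1 - x) ^ 1 * (-1))) x := by
        simpa using ((((hasDerivAt_id x).const_sub 1).pow 2)).const_mul 2
      have h3 := h1.sub h2
      refine h3.congr_deriv ?_
      push_cast
      ring
    have hanti : AntitoneOn G (Set.Icc b 1) := by
      apply antitoneOn_of_deriv_nonpos (convex_Icc b 1)
      · intro x hx
        exact (hderiv x (lt_of_lt_of_le hb hx.1)).continuousAt.continuousWithinAt
      · intro x hx
        rw [interior_Icc] at hx
        exact (hderiv x (hb.trans hx.1)).differentiableAt.differentiableWithinAt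
      · intro x hx
        rw [interior_Icc] at hx
        have hx0 : 0 < x := hb.trans hx.1
        rw [(hderiv x hx0).deriv]
        rw [show -x⁻¹ + 4 * (1 - x) = -((2 * x - 1) ^ 2) / x by field_simp; ring]
        apply div_nonpos_of_nonpos_of_nonneg (by nlinarith [sq_nonneg (2 * x - 1)]) (le_of_lt hx0)
    have hle : G 1 ≤ G b :=
      hanti (Set.mem_Icc.2 ⟨le_refl b, hb1⟩) (Set.mem_Icc.2 ⟨hb1, le_refl 1⟩) hb1
    have hG1 : G 1 = 0 := by simp [hG]
    have hGb : G b = -Real.log b - 2 * (1 - b) ^ 2 := rfl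
    rw [hG1, hGb] at hle
    have hlog : Real.log (1 / b) = -Real.log b := by
      rw [one_div, Real.log_inv]
    simp only [sub_self, zero_mul, add_zero, one_mul] at *
    rw [hlog]
    linarith
  · -- a < 1
    have ha0 : 0 < a := lt_of_lt_of_le hb hba
    set F : ℝ → ℝ := fun x => a * Real.log a - a * Real.log x + (1 - a) * Real.log (1 - a)
        - (1 - a) * Real.log (1 - x) - 2 * (a - x) ^ 2 with hF
    have hderiv : ∀ x : ℝ, 0 < x → x < 1 →
        HasDerivAt F (-(a * x⁻¹) + (1 - a) * (1 - x)⁻¹ + 4 * (a - x)) x := by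
      intro x hx hx1
      have h1 : HasDerivAt (fun y : ℝ => a * Real.log y) (a * x⁻¹) x :=
        (Real.hasDerivAt_log (ne_of_gt hx)).const_mul a
      have h2 : HasDerivAt (fun y : ℝ => (1 - a) * Real.log (1 - y))
          ((1 - a) * ((1 - x)⁻¹ * (-1))) x := by
        have hi : HasDerivAt (fun y : ℝ => 1 - y) (-1) x := (hasDerivAt_id x).const_sub 1
        exact ((Real.hasDerivAt_log (by linarith : (1:ℝ) - x ≠ 0)).comp x hi).const_mul (1 - a)
      have h3 : HasDerivAt (fun y : ℝ => 2 * (a - y) ^ 2) (2 * ((2 : ℕ) * (a - x) ^ 1 * (-1))) x := by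
        simpa using ((((hasDerivAt_id x).const_sub a).pow 2)).const_mul 2
      have h4 := (((hasDerivAt_const x (a * Real.log a)).sub h1).add_const
          ((1 - a) * Real.log (1 - a))).sub h2 |>.sub h3
      refine h4.congr_deriv ?_
      push_cast
      ring
    have hanti : AntitoneOn F (Set.Icc b a) := by
      apply antitoneOn_of_deriv_nonpos (convex_Icc b a)
      · intro x hx
        exact (hderiv x (lt_of_lt_of_le hb hx.1) (lt_of_le_of_lt hx.2 halt)).continuousAt.continuousWithinAt
      · intro x hx
        rw [interior_Icc] at hx
        exact (hderiv x (hb.trans hx.1) (hx.2.trans halt)).differentiableAt.differentiableWithinAt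
      · intro x hx
        rw [interior_Icc] at hx
        have hx0 : 0 < x := hb.trans hx.1
        have hx1 : x < 1 := hx.2.trans halt
        have hxa : x < a := hx.2
        have hne1 : (1:ℝ) - x ≠ 0 := by linarith
        have hne0 : x ≠ 0 := ne_of_gt hx0
        rw [(hderiv x hx0 hx1).deriv]
        rw [show -(a * x⁻¹) + (1 - a) * (1 - x)⁻¹ + 4 * (a - x)
            = ((a - x) * (4 * (x * (1 - x)) - 1)) / (x * (1 - x)) by
          field_simp
          ring]
        apply div_nonpos_of_nonpos_of_nonneg
        · nlinarith [sq_nonneg (2 * x - 1)]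
        · nlinarith
    have hle : F a ≤ F b :=
      hanti (Set.mem_Icc.2 ⟨le_refl b, hba⟩) (Set.mem_Icc.2 ⟨hba, le_refl a⟩) hba
    have hFa : F a = 0 := by simp only [hF]; ring
    have hFb : F b = a * Real.log a - a * Real.log b + (1 - a) * Real.log (1 - a)
        - (1 - a) * Real.log (1 - b) - 2 * (a - b) ^ 2 := rfl
    rw [hFa, hFb] at hle
    rw [Real.log_div (ne_of_gt ha0) (ne_of_gt hb),
        Real.log_div (by linarith : (1:ℝ) - a ≠ 0) (by linarith : (1:ℝ) - b ≠ 0)]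
    nlinarith [hle]

private lemma pinsker_finite {ι : Type*} [Fintype ι] (p q : ι → ℝ)
    (hp : ∀ i, 0 ≤ p i) (hq : ∀ i, 0 ≤ q i)
    (hp1 : ∑ i, p i = 1) (hq1 : ∑ i, q i = 1)
    (habs : ∀ i, q i = 0 → p i = 0) :
    (∑ i, |p i - q i|) ^ 2 ≤ 2 * ∑ i, p i * Real.log (p i / q i) := by
  classical
  set A := Finset.univ.filter (fun i => q i < p i) with hA
  set a := ∑ i ∈ A, p i with ha_def
  set b := ∑ i ∈ A, q i with hb_def
  have hAc : ∀ i ∈ Finset.univ.filter (fun i => ¬ q i < p i), p i ≤ q i := by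
    intro i hi
    have := (Finset.mem_filter.1 hi).2
    linarith [not_lt.1 this]
  have hpAc : ∑ i ∈ Finset.univ.filter (fun i => ¬ q i < p i), p i = 1 - a := by
    have := Finset.sum_filter_add_sum_filter_not Finset.univ (fun i => q i < p i) p
    rw [hp1] at this
    linarith [this]
  have hqAc : ∑ i ∈ Finset.univ.filter (fun i => ¬ q i < p i), q i = 1 - b := by
    have := Finset.sum_filter_add_sum_filter_not Finset.univ (fun i => q i < p i) q
    rw [hq1] at this
    linarith [this]
  have hb0 : 0 ≤ b := Finset.sum_nonneg (fun i _ => hq i)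
  have hba : b ≤ a := Finset.sum_le_sum (fun i hi => le_of_lt (Finset.mem_filter.1 hi).2)
  have ha1 : a ≤ 1 := by
    rw [← hp1]
    exact Finset.sum_le_sum_of_subset_of_nonneg (Finset.filter_subset _ _)
      (fun i _ _ => hp i)
  have habsab : b = 0 → a = 0 := by
    intro hbz
    have hallq : ∀ i ∈ A, q i = 0 :=
      (Finset.sum_eq_zero_iff_of_nonneg (fun i _ => hq i)).1 hbz
    exact Finset.sum_eq_zero (fun i hi => habs i (hallq i hi))
  -- total variation is 2 (a - b)
  have htv : ∑ i, |p i - q i| = 2 * (a - b) := by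
    rw [← Finset.sum_filter_add_sum_filter_not Finset.univ (fun i => q i < p i) (fun i => |p i - q i|)]
    have h1 : ∑ i ∈ A, |p i - q i| = a - b := by
      rw [ha_def, hb_def, ← Finset.sum_sub_distrib]
      exact Finset.sum_congr rfl (fun i hi => abs_of_pos (by linarith [(Finset.mem_filter.1 hi).2]))
    have h2 : ∑ i ∈ Finset.univ.filter (fun i => ¬ q i < p i), |p i - q i|
        = (1 - b) - (1 - a) := by
      rw [← hpAc, ← hqAc, ← Finset.sum_sub_distrib]
      exact Finset.sum_congr rfl (fun i hi => by
        rw [abs_sub_comm]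
        exact abs_of_nonneg (by linarith [hAc i hi]))
    rw [h1, h2]
    ring
  -- KL lower bound via log-sum
  have hKL : a * Real.log (a / b) + (1 - a) * Real.log ((1 - a) / (1 - b))
      ≤ ∑ i, p i * Real.log (p i / q i) := by
    rw [← Finset.sum_filter_add_sum_filter_not Finset.univ (fun i => q i < p i)
      (fun i => p i * Real.log (p i / q i))]
    have h1 := log_sum_ineq A p q (fun i _ => hp i) (fun i _ => hq i) (fun i _ => habs i)
    have h2 := log_sum_ineq (Finset.univ.filter (fun i => ¬ q i < p i)) p q
      (fun i _ => hp i) (fun i _ => hq i) (fun i _ => habs i)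
    rw [hpAc, hqAc] at h2
    rw [← ha_def, ← hb_def] at h1
    exact add_le_add h1 h2
  have hbin := binary_pinsker hb0 hba ha1 habsab
  rw [htv]
  nlinarith [hbin, hKL]

private lemma TV_nonneg' (p q : 𝒴 → ℝ) : 0 ≤ TV p q := by
  unfold TV; positivity

private lemma TV_comm' (p q : 𝒴 → ℝ) : TV p q = TV q p := by
  unfold TV
  congr 1
  exact Finset.sum_congr rfl fun y _ => abs_sub_comm _ _

private lemma TV_tri' (p q r : 𝒴 → ℝ) : TV p r ≤ TV p q + TV q r := by
  unfold TV
  rw [← mul_add, ← Finset.sum_add_distrib]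
  apply mul_le_mul_of_nonneg_left _ (by norm_num)
  exact Finset.sum_le_sum fun y _ => abs_sub_le _ _ _

/-- **Theorem 3 (mutual information case).** In the generalized fair learning problem, if
the ratio `P(x|y,s)/P(x|s)` does not depend on `s` and `P_S(s_max) = 1/2 + δ` with
`δ > 0`, then any optimal solution among rules with `I(Ŷ; S) ≤ ε` satisfies
`E_{s∼P_S}[TV(P_{Ŷ|S=s}, P_{Y|S=s_max})] ≤ (1/2 + 1/(4δ)) √(2ε)`. -/
theorem generalized_mi_fair_optimal_inductive_bias
    (P : 𝒳 → 𝒴 → 𝒮 → ℝ)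
    (hP0 : ∀ x y s, 0 ≤ P x y s)
    (hP1 : ∑ x, ∑ y, ∑ s, P x y s = 1)
    (hXS : ∀ x s, 0 < margXS P x s)
    (hYS : ∀ y s, 0 < margYS P y s)
    (φ : 𝒳 → 𝒴 → ℝ)
    (hφ : ∀ x y s, condRatio P x y s = φ x y)
    (smax : 𝒮) (δ : ℝ) (hδ : 0 < δ) (hsmax : margS P smax = 1 / 2 + δ)
    (ε : ℝ)
    (Q : 𝒳 → 𝒮 → 𝒴 → ℝ) (hQ : IsRule Q)
    (hfair : MI P Q ≤ ε)
    (hopt : ∀ Q' : 𝒳 → 𝒮 → 𝒴 → ℝ, IsRule Q' → MI P Q' ≤ ε →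
      objective P Q ≤ objective P Q') :
    ∑ s, margS P s * TV (condYhatS P Q s) (condYS P smax)
      ≤ (1 / 2 + 1 / (4 * δ)) * Real.sqrt (2 * ε) := by
  classical
  -- nonemptiness
  have h𝒳 : Nonempty 𝒳 := by
    by_contra h
    rw [not_nonempty_iff] at h
    simp at hP1
  have h𝒮 : Nonempty 𝒮 := by
    by_contra h
    rw [not_nonempty_iff] at h
    simp at hP1
  have hSpos : ∀ s, 0 < margS P s := fun s =>
    Finset.sum_pos (fun x _ => hXS x s) Finset.univ_nonempty
  have hS1 : ∑ s, margS P s = 1 := by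
    rw [← hP1]
    unfold margS margXS
    rw [Finset.sum_comm]
    exact Finset.sum_congr rfl fun x _ => Finset.sum_comm
  -- basic facts about jointYhatS / condYhatS / margYhat
  have hJ0 : ∀ y s, 0 ≤ jointYhatS P Q y s := fun y s =>
    Finset.sum_nonneg fun x _ => mul_nonneg (le_of_lt (hXS x s)) (hQ.1 x s y)
  have hJeq : ∀ y s, jointYhatS P Q y s = margS P s * condYhatS P Q s y := by
    intro y s
    unfold condYhatS
    exact (mul_div_cancel₀ _ (ne_of_gt (hSpos s))).symm
  have hJsum : ∀ s, ∑ y, jointYhatS P Q y s = margS P s := by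
    intro s
    unfold jointYhatS margS
    rw [Finset.sum_comm]
    exact Finset.sum_congr rfl fun x _ => by rw [← Finset.mul_sum, hQ.2 x s, mul_one]
  have hMYsum : ∑ y, margYhat P Q y = 1 := by
    unfold margYhat
    rw [Finset.sum_comm]
    rw [Finset.sum_congr rfl fun s (_ : s ∈ Finset.univ) => hJsum s]
    exact hS1
  have hMY0 : ∀ y, 0 ≤ margYhat P Q y := fun y =>
    Finset.sum_nonneg fun s _ => hJ0 y s
  -- Pinsker: E ≤ sqrt(2 ε) / 2
  set MYh := margYhat P Q with hMYh
  set E := ∑ s, margS P s * TV (condYhatS P Q s) MYh with hE_def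
  have habsJ : ∀ (z : 𝒴 × 𝒮), MYh z.1 * margS P z.2 = 0 → jointYhatS P Q z.1 z.2 = 0 := by
    intro ⟨y, s⟩ hz
    have hMY : MYh y = 0 := by
      rcases mul_eq_zero.1 hz with h | h
      · exact h
      · exact absurd h (ne_of_gt (hSpos s))
    have hle : jointYhatS P Q y s ≤ MYh y := by
      rw [hMYh]
      unfold margYhat
      exact Finset.single_le_sum (fun s' _ => hJ0 y s') (Finset.mem_univ s)
    exact le_antisymm (by simpa [hMY] using hle) (hJ0 y s)
  have hpins := pinsker_finite (ι := 𝒴 × 𝒮)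
      (fun z => jointYhatS P Q z.1 z.2) (fun z => MYh z.1 * margS P z.2)
      (fun z => hJ0 z.1 z.2)
      (fun z => mul_nonneg (hMY0 z.1) (le_of_lt (hSpos z.2)))
      (by rw [Fintype.sum_prod_type]
          exact hMYsum)
      (by rw [Fintype.sum_prod_type]
          calc ∑ y, ∑ s, MYh y * margS P s = ∑ y, MYh y * ∑ s, margS P s := by
                exact Finset.sum_congr rfl fun y _ => (Finset.mul_sum _ _ _).symm
            _ = 1 := by rw [hS1]; simpa using hMYsum)
      habsJ
  have hMIeq : ∑ z : 𝒴 × 𝒮, (fun z : 𝒴 × 𝒮 => jointYhatS P Q z.1 z.2) z *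
      Real.log ((fun z : 𝒴 × 𝒮 => jointYhatS P Q z.1 z.2) z /
        (fun z : 𝒴 × 𝒮 => MYh z.1 * margS P z.2) z) = MI P Q := by
    rw [Fintype.sum_prod_type]
    rfl
  have hTVs : ∀ s, margS P s * TV (condYhatS P Q s) MYh
      = (1/2) * ∑ y, |jointYhatS P Q y s - MYh y * margS P s| := by
    intro s
    unfold TV
    rw [← mul_assoc, mul_comm (margS P s) ((1:ℝ)/2), mul_assoc, Finset.mul_sum]
    congr 1
    refine Finset.sum_congr rfl fun y _ => ?_
    rw [show jointYhatS P Q y s - MYh y * margS P s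
        = margS P s * (condYhatS P Q s y - MYh y) by rw [hJeq]; ring]
    rw [abs_mul, abs_of_pos (hSpos s)]
  have hTVeq : ∑ z : 𝒴 × 𝒮, |(fun z : 𝒴 × 𝒮 => jointYhatS P Q z.1 z.2) z -
      (fun z : 𝒴 × 𝒮 => MYh z.1 * margS P z.2) z| = 2 * E := by
    rw [Fintype.sum_prod_type, Finset.sum_comm]
    rw [hE_def, Finset.mul_sum]
    refine Finset.sum_congr rfl fun s _ => ?_
    show ∑ y, |jointYhatS P Q y s - MYh y * margS P s|
        = 2 * (margS P s * TV (condYhatS P Q s) MYh)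
    rw [hTVs s]
    ring
  rw [hMIeq, hTVeq] at hpins
  have hε0 : 0 ≤ ε := by nlinarith [hfair, hpins, sq_nonneg (2 * E)]
  have hE0 : 0 ≤ E := Finset.sum_nonneg fun s _ =>
    mul_nonneg (le_of_lt (hSpos s)) (TV_nonneg' _ _)
  have hE_le : 2 * E ≤ Real.sqrt (2 * ε) := by
    have h2 : (2 * E) ^ 2 ≤ 2 * ε := le_trans hpins (by linarith)
    nlinarith [Real.sq_sqrt (by linarith : (0:ℝ) ≤ 2 * ε), Real.sqrt_nonneg (2 * ε),
      sq_nonneg (2 * E - Real.sqrt (2 * ε))]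
  have hmulsum : ∀ (c : ℝ) (f : 𝒴 → ℝ), c * ((1/2) * ∑ y, f y) = ∑ y, c * ((1/2) * f y) := by
    intro c f
    rw [Finset.mul_sum, Finset.mul_sum]
  -- structure facts from hφ
  have hkey : ∀ x y s, P x y s * margS P s = φ x y * (margXS P x s * margYS P y s) := by
    intro x y s
    have h := hφ x y s
    unfold condRatio at h
    field_simp [ne_of_gt (hYS y s), ne_of_gt (hXS x s), ne_of_gt (hSpos s)] at h
    linarith [h]
  have hφ0 : ∀ x y, 0 ≤ φ x y := by
    intro x y
    obtain ⟨s⟩ := h𝒮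
    rw [← hφ x y s]
    unfold condRatio
    have h1 : 0 ≤ P x y s / margYS P y s := div_nonneg (hP0 x y s) (le_of_lt (hYS y s))
    have h2 : 0 ≤ margXS P x s / margS P s :=
      div_nonneg (le_of_lt (hXS x s)) (le_of_lt (hSpos s))
    positivity
  have hsumφ : ∀ y s, ∑ x, margXS P x s * φ x y = margS P s := by
    intro y s
    have ht : ∀ x, margXS P x s * φ x y = P x y s * (margS P s / margYS P y s) := by
      intro x
      rw [mul_div_assoc']
      rw [eq_div_iff (ne_of_gt (hYS y s))]
      linear_combination -(hkey x y s)
    calc ∑ x, margXS P x s * φ x y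
        = ∑ x, P x y s * (margS P s / margYS P y s) :=
          Finset.sum_congr rfl fun x _ => ht x
      _ = (∑ x, P x y s) * (margS P s / margYS P y s) := (Finset.sum_mul _ _ _).symm
      _ = margS P s := by
          rw [show (∑ x, P x y s) = margYS P y s from rfl, mul_comm,
            div_mul_eq_mul_div, mul_div_assoc, div_self (ne_of_gt (hYS y s)), mul_one]
  have hcond : ∀ x s y, condYXS P x s y = φ x y * condYS P s y := by
    intro x s y
    unfold condYXS condYS
    rw [show φ x y * (margYS P y s / margS P s) = (φ x y * margYS P y s) / margS P s by ring]
    rw [div_eq_div_iff (ne_of_gt (hXS x s)) (ne_of_gt (hSpos s))]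
    linear_combination hkey x y s
  -- the comparison rule Q'
  set ν := condYS P smax with hν_def
  set Q' : 𝒳 → 𝒮 → 𝒴 → ℝ := fun x s y => φ x y * ν y with hQ'_def
  have hQ'sum : ∀ x s, ∑ y, Q' x s y = 1 := by
    intro x s
    have heq : ∀ y, Q' x s y = condYXS P x smax y := fun y => (hcond x smax y).symm
    rw [Finset.sum_congr rfl fun y _ => heq y]
    unfold condYXS
    rw [← Finset.sum_div]
    exact div_self (ne_of_gt (hXS x smax))
  have hν0 : ∀ y, 0 ≤ ν y := fun y =>
    div_nonneg (le_of_lt (hYS y smax)) (le_of_lt (hSpos smax))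
  have hrule' : IsRule Q' := ⟨fun x s y => mul_nonneg (hφ0 x y) (hν0 y), hQ'sum⟩
  have hJ' : ∀ y s, jointYhatS P Q' y s = margS P s * ν y := by
    intro y s
    unfold jointYhatS
    calc ∑ x, margXS P x s * (φ x y * ν y)
        = (∑ x, margXS P x s * φ x y) * ν y := by
          rw [Finset.sum_mul]
          exact Finset.sum_congr rfl fun x _ => by ring
      _ = margS P s * ν y := by rw [hsumφ y s]
  have hMY' : ∀ y, margYhat P Q' y = ν y := by
    intro y
    unfold margYhat
    rw [Finset.sum_congr rfl fun s (_ : s ∈ Finset.univ) => hJ' y s, ← Finset.sum_mul, hS1,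
      one_mul]
  have hMI' : MI P Q' = 0 := by
    unfold MI
    refine Finset.sum_eq_zero fun y _ => Finset.sum_eq_zero fun s _ => ?_
    rw [show jointYhatS P Q' y s = margS P s * ν y from hJ' y s,
        show margYhat P Q' y = ν y from hMY' y]
    by_cases hy : ν y = 0
    · rw [hy]; ring
    · rw [mul_comm (ν y) (margS P s), div_self (mul_ne_zero (ne_of_gt (hSpos s)) hy),
        Real.log_one, mul_zero]
  have hopt' := hopt Q' hrule' (by rw [hMI']; exact hε0)
  -- objective of Q'
  have hobjQ' : objective P Q' = ∑ s, margS P s * TV (condYS P s) ν := by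
    unfold objective
    rw [Finset.sum_comm]
    refine Finset.sum_congr rfl fun s _ => ?_
    have hTVxs : ∀ x, TV (Q' x s) (condYXS P x s)
        = (1/2) * ∑ y, φ x y * |condYS P s y - ν y| := by
      intro x
      unfold TV
      rw [Finset.mul_sum, Finset.mul_sum]
      refine Finset.sum_congr rfl fun y _ => ?_
      rw [hcond x s y,
          show Q' x s y - φ x y * condYS P s y = φ x y * (ν y - condYS P s y) by
            rw [hQ'_def]; ring,
          abs_mul, abs_of_nonneg (hφ0 x y), abs_sub_comm]
    calc ∑ x, margXS P x s * TV (Q' x s) (condYXS P x s)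
        = ∑ x, ∑ y, (margXS P x s * φ x y) * ((1/2) * |condYS P s y - ν y|) := by
          refine Finset.sum_congr rfl fun x _ => ?_
          rw [hTVxs x, Finset.mul_sum, Finset.mul_sum]
          exact Finset.sum_congr rfl fun y _ => by ring
      _ = ∑ y, (∑ x, margXS P x s * φ x y) * ((1/2) * |condYS P s y - ν y|) := by
          rw [Finset.sum_comm]
          exact Finset.sum_congr rfl fun y _ => (Finset.sum_mul _ _ _).symm
      _ = margS P s * TV (condYS P s) ν := by
          unfold TV
          rw [hmulsum]
          exact Finset.sum_congr rfl fun y _ => by rw [hsumφ y s]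
  -- lower bound on the objective of Q
  have hobjQlb : ∑ s, margS P s * TV (condYhatS P Q s) (condYS P s) ≤ objective P Q := by
    unfold objective
    rw [Finset.sum_comm]
    refine Finset.sum_le_sum fun s _ => ?_
    have hL : margS P s * TV (condYhatS P Q s) (condYS P s)
        = (1/2) * ∑ y, |jointYhatS P Q y s - margYS P y s| := by
      unfold TV
      rw [hmulsum, Finset.mul_sum]
      refine Finset.sum_congr rfl fun y _ => ?_
      rw [show jointYhatS P Q y s - margYS P y s
          = margS P s * (condYhatS P Q s y - condYS P s y) by
        unfold condYhatS condYS
        field_simp [ne_of_gt (hSpos s)]]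
      rw [abs_mul, abs_of_pos (hSpos s)]
      ring
    have hR : ∑ x, margXS P x s * TV (Q x s) (condYXS P x s)
        = ∑ y, (1/2) * ∑ x, |margXS P x s * Q x s y - P x y s| := by
      calc ∑ x, margXS P x s * TV (Q x s) (condYXS P x s)
          = ∑ x, ∑ y, (1/2) * |margXS P x s * Q x s y - P x y s| := by
            refine Finset.sum_congr rfl fun x _ => ?_
            unfold TV
            rw [hmulsum]
            refine Finset.sum_congr rfl fun y _ => ?_
            rw [show margXS P x s * Q x s y - P x y s
                = margXS P x s * (Q x s y - condYXS P x s y) by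
              unfold condYXS
              field_simp [ne_of_gt (hXS x s)]]
            rw [abs_mul, abs_of_pos (hXS x s)]
            ring
        _ = ∑ y, (1/2) * ∑ x, |margXS P x s * Q x s y - P x y s| := by
            rw [Finset.sum_comm]
            exact Finset.sum_congr rfl fun y _ => (Finset.mul_sum _ _ _).symm
    rw [hL, hR, Finset.mul_sum]
    refine Finset.sum_le_sum fun y _ => ?_
    apply mul_le_mul_of_nonneg_left _ (by norm_num : (0:ℝ) ≤ 1/2)
    rw [show jointYhatS P Q y s - margYS P y s
        = ∑ x, (margXS P x s * Q x s y - P x y s) by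
      unfold jointYhatS margYS
      rw [Finset.sum_sub_distrib]]
    exact Finset.abs_sum_le_sum_abs _ _
  -- combine everything
  have hBC : ∑ s, margS P s * TV (condYhatS P Q s) (condYS P s)
      ≤ ∑ s, margS P s * TV (condYS P s) ν :=
    le_trans hobjQlb (le_trans hopt' (le_of_eq hobjQ'))
  set D := TV (condYhatS P Q smax) ν with hD_def
  set G := TV MYh (condYhatS P Q smax) with hG_def
  have hD0 : 0 ≤ D := TV_nonneg' _ _
  have hG0 : 0 ≤ G := TV_nonneg' _ _
  have hsplit : ∀ f : 𝒮 → ℝ, ∑ s, margS P s * f s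
      = margS P smax * f smax + ∑ s ∈ Finset.univ.erase smax, margS P s * f s :=
    fun f => (Finset.add_sum_erase Finset.univ (fun s => margS P s * f s)
      (Finset.mem_univ smax)).symm
  have herase : ∑ s ∈ Finset.univ.erase smax, margS P s = 1/2 - δ := by
    have h := Finset.add_sum_erase Finset.univ (margS P) (Finset.mem_univ smax)
    rw [hS1, hsmax] at h
    linarith
  have hTVsmax0 : TV (condYS P smax) ν = 0 := by
    rw [← hν_def]
    unfold TV
    simp
  have hstep : ∀ s, TV (condYS P s) ν
      ≤ TV (condYhatS P Q s) (condYS P s) + TV (condYhatS P Q s) MYh + (G + D) := by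
    intro s
    have t1 := TV_tri' (condYS P s) (condYhatS P Q s) ν
    have t2 := TV_tri' (condYhatS P Q s) MYh ν
    have t3 := TV_tri' MYh (condYhatS P Q smax) ν
    have tc := TV_comm' (condYS P s) (condYhatS P Q s)
    rw [hG_def, hD_def]
    linarith
  have hC_le : ∑ s, margS P s * TV (condYS P s) ν
      ≤ (∑ s, margS P s * TV (condYhatS P Q s) (condYS P s)) + E - 2 * δ * (G + D) := by
    rw [hsplit (fun s => TV (condYS P s) ν), hTVsmax0, mul_zero, zero_add]
    have hb : ∑ s ∈ Finset.univ.erase smax, margS P s * TV (condYS P s) ν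
        ≤ ∑ s ∈ Finset.univ.erase smax, margS P s *
          (TV (condYhatS P Q s) (condYS P s) + TV (condYhatS P Q s) MYh + (G + D)) :=
      Finset.sum_le_sum fun s _ =>
        mul_le_mul_of_nonneg_left (hstep s) (le_of_lt (hSpos s))
    refine le_trans hb ?_
    have hsum_dist : ∑ s ∈ Finset.univ.erase smax, margS P s *
          (TV (condYhatS P Q s) (condYS P s) + TV (condYhatS P Q s) MYh + (G + D))
        = (∑ s ∈ Finset.univ.erase smax, margS P s * TV (condYhatS P Q s) (condYS P s))
          + (∑ s ∈ Finset.univ.erase smax, margS P s * TV (condYhatS P Q s) MYh)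
          + (1/2 - δ) * (G + D) := by
      rw [← herase, Finset.sum_mul, ← Finset.sum_add_distrib, ← Finset.sum_add_distrib]
      exact Finset.sum_congr rfl fun s _ => by ring
    rw [hsum_dist]
    have hBer : ∑ s ∈ Finset.univ.erase smax, margS P s * TV (condYhatS P Q s) (condYS P s)
        = (∑ s, margS P s * TV (condYhatS P Q s) (condYS P s)) - (1/2 + δ) * D := by
      rw [hsplit (fun s => TV (condYhatS P Q s) (condYS P s)), hsmax,
        show TV (condYhatS P Q smax) (condYS P smax) = D by rw [hD_def, ← hν_def]]
      ring
    have hEer : ∑ s ∈ Finset.univ.erase smax, margS P s * TV (condYhatS P Q s) MYh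
        = E - (1/2 + δ) * G := by
      rw [hE_def, hsplit (fun s => TV (condYhatS P Q s) MYh), hsmax,
        show TV (condYhatS P Q smax) MYh = G by rw [hG_def]; exact TV_comm' _ _]
      ring
    rw [hBer, hEer]
    exact le_of_eq (by ring)
  have hGD : 2 * δ * (G + D) ≤ E := by linarith [hBC, hC_le]
  have hstep2 : ∀ s, TV (condYhatS P Q s) ν ≤ TV (condYhatS P Q s) MYh + (G + D) := by
    intro s
    have t1 := TV_tri' (condYhatS P Q s) MYh ν
    have t2 := TV_tri' MYh (condYhatS P Q smax) ν
    rw [hG_def, hD_def]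
    linarith
  have hT_le : ∑ s, margS P s * TV (condYhatS P Q s) ν ≤ E + (G + D) := by
    calc ∑ s, margS P s * TV (condYhatS P Q s) ν
        ≤ ∑ s, margS P s * (TV (condYhatS P Q s) MYh + (G + D)) :=
          Finset.sum_le_sum fun s _ =>
            mul_le_mul_of_nonneg_left (hstep2 s) (le_of_lt (hSpos s))
      _ = (∑ s, margS P s * TV (condYhatS P Q s) MYh) + (∑ s, margS P s) * (G + D) := by
          rw [Finset.sum_mul, ← Finset.sum_add_distrib]
          exact Finset.sum_congr rfl fun s _ => by ring
      _ = E + (G + D) := by rw [hS1, hE_def, one_mul]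
  -- final numeric bound
  have hS0 : 0 ≤ Real.sqrt (2 * ε) := Real.sqrt_nonneg _
  have h4δ : (0:ℝ) < 4 * δ := by linarith
  have key : (4 * δ) * (∑ s, margS P s * TV (condYhatS P Q s) ν)
      ≤ (4 * δ) * ((1 / 2 + 1 / (4 * δ)) * Real.sqrt (2 * ε)) := by
    have hrhs : (4 * δ) * ((1 / 2 + 1 / (4 * δ)) * Real.sqrt (2 * ε))
        = (2 * δ + 1) * Real.sqrt (2 * ε) := by
      field_simp
      ring
    rw [hrhs]
    nlinarith [mul_le_mul_of_nonneg_left hT_le (le_of_lt h4δ),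
      mul_le_mul_of_nonneg_left hE_le (by linarith : (0:ℝ) ≤ 2 * δ), hGD, hE0, hS0, hG0, hD0]
  exact le_of_mul_le_mul_left key h4δ

end
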